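/- arXiv:1702.03573 — 2 statements merged into one kernel-verified Lean document; each statement's English description precedes it below -/
import Mathlib

section
/- Let (Ω, 𝓕, (𝓕_t)_{t≥0}, P) be a filtered probability space, let τ : Ω → [0,∞] be a random time admitting an announcing sequence (τ_n)_{n∈ℕ}, and let X = (X_t)_{t≥0} be a real-valued adapted process with right-continuous paths that is bounded from below by a constant and such that for each n the stopped process X^{τ_n} is a supermartingale. Then for almost every ω the limit lim_{t↑τ(ω)} X_t(ω) exists in ℝ (finite); here, when τ(ω) = ∞ this means that lim_{t→∞} X_t(ω) exists in ℝ. -/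
open MeasureTheory Filter Set
open scoped NNReal ENNReal Topology

/-! Auxiliary material for the supermartingale convergence theorem on a stochastic
interval.  We count "upcrossing patterns" of the process along dyadic grids. -/

noncomputable def dy (m k : ℕ) : ℝ≥0 := (k : ℝ≥0) / 2 ^ m

lemma dy_strictMono (m : ℕ) : StrictMono (dy m) := by
  intro i j hij
  have h2 : (0:ℝ≥0) < 2 ^ m := by positivity
  unfold dy
  rw [div_lt_div_iff_of_pos_right h2]
  exact_mod_cast hij

lemma dy_raise {m M : ℕ} (hmM : m ≤ M) (k : ℕ) : dy m k = dy M (k * 2 ^ (M - m)) := by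
  unfold dy
  have hM : (2:ℝ≥0) ^ M = 2 ^ m * 2 ^ (M - m) := by
    rw [← pow_add]
    congr 1
    omega
  push_cast
  rw [hM, div_eq_div_iff (by positivity) (by positivity)]
  ring

lemma dy_succ (m k : ℕ) : dy m k = dy (m + 1) (k * 2) := by
  have h := dy_raise (m := m) (M := m + 1) (by omega) k
  simpa using h

lemma dy_exists_btwn {x y : ℝ≥0} (hxy : x < y) : ∃ m k, x < dy m k ∧ dy m k < y := by
  obtain ⟨m, hm⟩ := exists_pow_lt_of_lt_one
    (tsub_pos_of_lt hxy) (show (2:ℝ≥0)⁻¹ < 1 by rw [← NNReal.coe_lt_coe]; push_cast; norm_num)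
  have h2 : (0:ℝ) < 2 ^ m := by positivity
  have hfl : ((⌊(x : ℝ) * 2 ^ m⌋₊ : ℝ)) ≤ (x:ℝ) * 2 ^ m := Nat.floor_le (by positivity)
  have hfl2 : (x:ℝ) * 2 ^ m < ⌊(x : ℝ) * 2 ^ m⌋₊ + 1 := Nat.lt_floor_add_one _
  have hm' : ((2:ℝ)^m)⁻¹ < (y:ℝ) - (x:ℝ) := by
    have := (NNReal.coe_lt_coe.2 hm)
    rw [NNReal.coe_sub hxy.le] at this
    calc ((2:ℝ)^m)⁻¹ = ((2:ℝ)⁻¹)^m := by rw [inv_pow]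
    _ = ((2⁻¹ : ℝ≥0) ^ m : ℝ≥0) := by push_cast; ring
    _ < _ := this
  refine ⟨m, ⌊(x : ℝ) * 2 ^ m⌋₊ + 1, ?_, ?_⟩
  · rw [← NNReal.coe_lt_coe]
    unfold dy
    push_cast
    rw [lt_div_iff₀ h2]
    exact hfl2
  · rw [← NNReal.coe_lt_coe]
    unfold dy
    push_cast
    rw [div_lt_iff₀ h2]
    have h1 : 1 < ((y:ℝ)-(x:ℝ)) * 2^m := by
      rw [← div_lt_iff₀ h2, div_eq_inv_mul, mul_one]
      exact hm'
    nlinarith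

/-- `K` alternations (below `a`, then above `b`) of the path `h` along the `m`-th dyadic grid. -/
def pat (a b : ℝ) (h : ℝ≥0 → ℝ) (m K : ℕ) : Prop :=
  ∃ v w : Fin K → ℕ, (∀ i, v i < w i ∧ h (dy m (v i)) < a ∧ b < h (dy m (w i))) ∧
    ∀ i j : Fin K, i < j → w i < v j

/-- Supremum of the lengths of alternation patterns along the `m`-th dyadic grid. -/
noncomputable def patCnt (a b : ℝ) (h : ℝ≥0 → ℝ) (m : ℕ) : ℝ≥0∞ :=
  ⨆ (K : ℕ) (_ : pat a b h m K), (K : ℝ≥0∞)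

lemma pat_succ {a b : ℝ} {h : ℝ≥0 → ℝ} {m K : ℕ} (hp : pat a b h m K) :
    pat a b h (m + 1) K := by
  obtain ⟨v, w, h1, h2⟩ := hp
  refine ⟨fun i => v i * 2, fun i => w i * 2, fun i => ?_, fun i j hij => ?_⟩
  · refine ⟨show v i * 2 < w i * 2 by have := (h1 i).1; omega, ?_, ?_⟩
    · rw [← dy_succ]; exact (h1 i).2.1
    · rw [← dy_succ]; exact (h1 i).2.2
  · show w i * 2 < v j * 2
    have := h2 i j hij; omega

lemma patCnt_mono (a b : ℝ) (h : ℝ≥0 → ℝ) : Monotone (patCnt a b h) := by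
  refine monotone_nat_of_le_succ fun m => ?_
  refine iSup_le fun K => iSup_le fun hK => ?_
  exact le_iSup_of_le K (le_iSup_of_le (pat_succ hK) le_rfl)

lemma measurable_patCnt {Ω : Type*} {mΩ : MeasurableSpace Ω} {a b : ℝ} {g : ℝ≥0 → Ω → ℝ}
    (hg : ∀ t, Measurable (g t)) (m : ℕ) :
    Measurable (fun ω => patCnt a b (fun t => g t ω) m) := by
  refine Measurable.iSup fun K => ?_
  have hset : MeasurableSet {ω | pat a b (fun t => g t ω) m K} := by
    have : {ω | pat a b (fun t => g t ω) m K} =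
        ⋃ (v : Fin K → ℕ), ⋃ (w : Fin K → ℕ),
          ((⋂ i, ({ω | v i < w i} ∩ {ω | g (dy m (v i)) ω < a} ∩ {ω | b < g (dy m (w i)) ω})) ∩
           ⋂ (i) (j) (_ : i < j), {ω | w i < v j}) := by
      ext ω
      simp only [pat, mem_setOf_eq, mem_iUnion, mem_inter_iff, mem_iInter, mem_setOf_eq]
      constructor
      · rintro ⟨v, w, h1, h2⟩
        exact ⟨v, w, fun i => ⟨⟨(h1 i).1, (h1 i).2.1⟩, (h1 i).2.2⟩, h2⟩
      · rintro ⟨v, w, h1, h2⟩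
        exact ⟨v, w, fun i => ⟨(h1 i).1.1, (h1 i).1.2, (h1 i).2⟩, h2⟩
    rw [this]
    refine MeasurableSet.iUnion fun v => MeasurableSet.iUnion fun w => MeasurableSet.inter ?_ ?_
    · refine MeasurableSet.iInter fun i => ((MeasurableSet.inter ?_ ?_).inter ?_)
      · exact MeasurableSet.const _
      · exact measurableSet_lt (hg _) measurable_const
      · exact measurableSet_lt measurable_const (hg _)
    · exact MeasurableSet.iInter fun i => MeasurableSet.iInter fun j =>
        MeasurableSet.iInter fun _ => MeasurableSet.const _
  have : (fun ω => ⨆ (_ : pat a b (fun t => g t ω) m K), (K : ℝ≥0∞)) =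
      fun ω => Set.indicator {ω | pat a b (fun t => g t ω) m K} (fun _ => (K:ℝ≥0∞)) ω := by
    ext ω
    simp only [Set.indicator, mem_setOf_eq]
    split_ifs with hP
    · rw [iSup_pos (p := pat a b (fun t => g t ω) m K) hP]
    · rw [iSup_neg (p := pat a b (fun t => g t ω) m K) hP, bot_eq_zero]
  rw [this]
  exact Measurable.indicator measurable_const hset

/-- an alternation pattern of length `K` forces at least `K` upcrossings. -/
lemma pat_le_upcrossings {Ω : Type*} {a b : ℝ} (hab : a < b) {f : ℕ → Ω → ℝ} {ω : Ω}
    {K : ℕ} (v w : Fin K → ℕ)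
    (h1 : ∀ i, v i < w i ∧ f (v i) ω < a ∧ b < f (w i) ω)
    (h2 : ∀ i j : Fin K, i < j → w i < v j) :
    (K : ℝ≥0∞) ≤ upcrossings a b f ω := by
  have key : ∀ i : ℕ, ∀ hi : i < K, i + 1 ≤ upcrossingsBefore a b f (w ⟨i, hi⟩ + 1) ω := by
    intro i
    induction i with
    | zero =>
      intro hi
      have := upcrossingsBefore_lt_of_exists_upcrossing (f := f) (ω := ω) hab
        (N := 0) (N₁ := v ⟨0, hi⟩) (N₂ := w ⟨0, hi⟩) (Nat.zero_le _)
        (h1 ⟨0, hi⟩).2.1 (h1 ⟨0, hi⟩).1.le (h1 ⟨0, hi⟩).2.2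
      omega
    | succ i ih =>
      intro hi
      have hi' : i < K := Nat.lt_of_succ_lt hi
      have hlt : w ⟨i, hi'⟩ + 1 ≤ v ⟨i + 1, hi⟩ := h2 ⟨i, hi'⟩ ⟨i + 1, hi⟩ (by simp)
      have := upcrossingsBefore_lt_of_exists_upcrossing (f := f) (ω := ω) hab
        (N := w ⟨i, hi'⟩ + 1) (N₁ := v ⟨i+1, hi⟩) (N₂ := w ⟨i+1, hi⟩) hlt
        (h1 ⟨i+1, hi⟩).2.1 (h1 ⟨i+1, hi⟩).1.le (h1 ⟨i+1, hi⟩).2.2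
      have := ih hi'
      omega
  rcases Nat.eq_zero_or_pos K with hK | hK
  · simp [hK]
  · have hKK : K - 1 < K := by omega
    have := key (K-1) hKK
    calc (K : ℝ≥0∞) = ((K - 1 + 1 : ℕ) : ℝ≥0∞) := by congr 1; omega
    _ ≤ (upcrossingsBefore a b f (w ⟨K-1, hKK⟩ + 1) ω : ℝ≥0∞) := by exact_mod_cast this
    _ ≤ upcrossings a b f ω := le_iSup (fun N => (upcrossingsBefore a b f N ω : ℝ≥0∞)) _

/-- reindexing a filtration along a monotone time map. -/
def filtComp {Ω : Type*} {mΩ : MeasurableSpace Ω} (𝓕 : Filtration ℝ≥0 mΩ)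
    (u : ℕ → ℝ≥0) (hu : Monotone u) : Filtration ℕ mΩ where
  seq := fun k => 𝓕 (u k)
  mono' := fun _ _ hij => 𝓕.mono (hu hij)
  le' := fun k => 𝓕.le (u k)

lemma MeasureTheory.Supermartingale.comp_monotone {Ω : Type*} {mΩ : MeasurableSpace Ω} {P : Measure Ω}
    {𝓕 : Filtration ℝ≥0 mΩ} {Y : ℝ≥0 → Ω → ℝ} (hY : Supermartingale Y 𝓕 P)
    (u : ℕ → ℝ≥0) (hu : Monotone u) :
    Supermartingale (fun k => Y (u k)) (filtComp 𝓕 u hu) P :=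
  ⟨fun k => hY.1 (u k), fun i j hij => hY.2.1 (u i) (u j) (hu hij), fun k => hY.2.2 (u k)⟩

lemma lintegral_upcrossings_le {Ω : Type*} {mΩ : MeasurableSpace Ω} {P : Measure Ω}
    [IsProbabilityMeasure P] {ℱ : Filtration ℕ mΩ} {f : ℕ → Ω → ℝ} {a b d : ℝ}
    (hab : a < b) (hf : Submartingale f ℱ P) (hd : ∀ k ω, f k ω ≤ d) :
    ∫⁻ ω, upcrossings a b f ω ∂P ≤ ENNReal.ofReal ((d - a)⁺) / ENNReal.ofReal (b - a) := by
  rw [ENNReal.le_div_iff_mul_le (Or.inl (ENNReal.ofReal_pos.2 (sub_pos.2 hab)).ne')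
    (Or.inl ENNReal.ofReal_ne_top), mul_comm]
  refine le_trans (hf.mul_lintegral_upcrossings_le_lintegral_pos_part a b) ?_
  refine iSup_le fun N => ?_
  calc ∫⁻ ω, ENNReal.ofReal ((f N ω - a)⁺) ∂P
      ≤ ∫⁻ _, ENNReal.ofReal ((d - a)⁺) ∂P := by
        refine lintegral_mono fun ω => ENNReal.ofReal_le_ofReal ?_
        exact posPart_mono (by linarith [hd N ω])
    _ = ENNReal.ofReal ((d - a)⁺) := by simp

/-- Supermartingale convergence on a stochastic interval `[0, τ)`:
a right-continuous adapted process, bounded below, whose stoppings along an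
announcing sequence for `τ` are supermartingales, has an a.s. finite limit at `τ`. -/
theorem supermartingale_on_stochastic_interval_converges
    {Ω : Type*} {mΩ : MeasurableSpace Ω} {P : Measure Ω} [IsProbabilityMeasure P]
    (𝓕 : Filtration ℝ≥0 mΩ)
    (τ : Ω → ℝ≥0∞) (τn : ℕ → Ω → ℝ≥0)
    (hstop : ∀ n, IsStoppingTime 𝓕 (fun ω => ((τn n ω : ℝ≥0) : WithTop ℝ≥0)))
    (hmono : ∀ ω, Monotone fun n => τn n ω)
    (hann : ∀ᵐ ω ∂P, (0 < τ ω → ∀ n, (τn n ω : ℝ≥0∞) < τ ω) ∧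
      Tendsto (fun n => (τn n ω : ℝ≥0∞)) atTop (𝓝 (τ ω)))
    (X : ℝ≥0 → Ω → ℝ)
    (hadapted : Adapted 𝓕 X)
    (hrc : ∀ ω t, ContinuousWithinAt (fun s => X s ω) (Ici t) t)
    (c : ℝ) (hbdd : ∀ t ω, c ≤ X t ω)
    (hsup : ∀ n, Supermartingale (MeasureTheory.stoppedProcess X (fun ω => ((τn n ω : ℝ≥0) : WithTop ℝ≥0))) 𝓕 P) :
    ∀ᵐ ω ∂P, ∃ L : ℝ,
      (τ ω = ∞ → Tendsto (fun t : ℝ≥0 => X t ω) atTop (𝓝 L)) ∧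
      (∀ r : ℝ≥0, τ ω = (r : ℝ≥0∞) → Tendsto (fun t : ℝ≥0 => X t ω) (𝓝[<] r) (𝓝 L)) := by
  classical
  -- measurability of the stopped processes
  have hYmeas : ∀ n (t : ℝ≥0), Measurable (MeasureTheory.stoppedProcess X (fun ω => ((τn n ω : ℝ≥0) : WithTop ℝ≥0)) t) :=
    fun n t => ((hsup n).stronglyMeasurable t).measurable.mono (𝓕.le t) le_rfl
  have hgmeas : ∀ n (t : ℝ≥0),
      Measurable (fun ω => -(MeasureTheory.stoppedProcess X (fun ω => ((τn n ω : ℝ≥0) : WithTop ℝ≥0)) t ω)) :=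
    fun n t => (hYmeas n t).neg
  -- the reindexed negated stopped processes are submartingales
  have hsubm : ∀ n m, Submartingale
      (fun k ω => -(MeasureTheory.stoppedProcess X (fun ω => ((τn n ω : ℝ≥0) : WithTop ℝ≥0)) (dy m k) ω))
      (filtComp 𝓕 (dy m) (dy_strictMono m).monotone) P := by
    intro n m
    exact ((hsup n).comp_monotone (dy m) (dy_strictMono m).monotone).neg
  -- uniform bound on the pattern counts
  have hBle : ∀ (a b : ℝ), a < b → ∀ n,
      ∫⁻ ω, (⨆ m, patCnt a b (fun t => -(MeasureTheory.stoppedProcess X (fun ω => ((τn n ω : ℝ≥0) : WithTop ℝ≥0)) t ω)) m) ∂P ≤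
        ENNReal.ofReal ((-c - a)⁺) / ENNReal.ofReal (b - a) := by
    intro a b hab n
    rw [lintegral_iSup (fun m => measurable_patCnt (hgmeas n) m)
      (fun m m' hmm' ω => patCnt_mono a b _ hmm')]
    refine iSup_le fun m => ?_
    refine le_trans (lintegral_mono fun ω => ?_)
      (lintegral_upcrossings_le hab (hsubm n m)
        (fun k ω' => by exact neg_le_neg (hbdd _ ω')))
    refine iSup_le fun K => iSup_le fun hK => ?_
    obtain ⟨v, w, h1, h2⟩ := hK
    exact pat_le_upcrossings hab v w h1 h2
  -- a.s. finiteness of the asymptotic pattern counts, all rational levels at once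
  have hE2 : ∀ᵐ ω ∂P, ∀ (a b : ℚ), (a:ℝ) < (b:ℝ) →
      liminf (fun n => ⨆ m,
        patCnt (a:ℝ) (b:ℝ) (fun t => -(MeasureTheory.stoppedProcess X (fun ω => ((τn n ω : ℝ≥0) : WithTop ℝ≥0)) t ω)) m) atTop
        ≠ ⊤ := by
    rw [ae_all_iff]
    intro a
    rw [ae_all_iff]
    intro b
    by_cases hab : (a:ℝ) < (b:ℝ)
    · have hmeas : ∀ n, Measurable (fun ω => ⨆ m,
          patCnt (a:ℝ) (b:ℝ) (fun t => -(MeasureTheory.stoppedProcess X (fun ω => ((τn n ω : ℝ≥0) : WithTop ℝ≥0)) t ω)) m) :=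
        fun n => Measurable.iSup fun m => measurable_patCnt (hgmeas n) m
      have hfin : ∫⁻ ω, liminf (fun n => ⨆ m,
          patCnt (a:ℝ) (b:ℝ) (fun t => -(MeasureTheory.stoppedProcess X (fun ω => ((τn n ω : ℝ≥0) : WithTop ℝ≥0)) t ω)) m)
            atTop ∂P ≠ ⊤ := by
        have hC : ENNReal.ofReal ((-c - (a:ℝ))⁺) / ENNReal.ofReal ((b:ℝ) - (a:ℝ)) ≠ ⊤ :=
          (ENNReal.div_lt_top ENNReal.ofReal_ne_top
            (ENNReal.ofReal_pos.2 (sub_pos.2 hab)).ne').ne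
        refine ne_top_of_le_ne_top hC ?_
        refine le_trans (lintegral_liminf_le hmeas) ?_
        exact liminf_le_of_frequently_le
          (Frequently.of_forall fun n => hBle _ _ hab n) (by isBoundedDefault)
      filter_upwards [ae_lt_top (Measurable.liminf hmeas) hfin] with ω hω _
      exact hω.ne
    · filter_upwards with ω hab'
      exact absurd hab' hab
  -- a.s. finiteness of the limit values along the announcing sequence
  have hZle : ∀ n (j : ℕ), ∫⁻ ω,
      ENNReal.ofReal (MeasureTheory.stoppedProcess X (fun ω => ((τn n ω : ℝ≥0) : WithTop ℝ≥0)) (j:ℝ≥0) ω - c) ∂P ≤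
        ENNReal.ofReal (∫ ω, X 0 ω ∂P - c) := by
    intro n j
    have hint : Integrable (fun ω => MeasureTheory.stoppedProcess X (fun ω => ((τn n ω : ℝ≥0) : WithTop ℝ≥0)) (j:ℝ≥0) ω - c) P :=
      ((hsup n).integrable _).sub (integrable_const c)
    rw [← ofReal_integral_eq_lintegral_ofReal hint
      (Eventually.of_forall fun ω => sub_nonneg.2 (hbdd _ _))]
    refine ENNReal.ofReal_le_ofReal ?_
    rw [integral_sub ((hsup n).integrable _) (integrable_const c), integral_const]
    have hle : ∫ ω, MeasureTheory.stoppedProcess X (fun ω => ((τn n ω : ℝ≥0) : WithTop ℝ≥0)) (j:ℝ≥0) ω ∂P ≤ ∫ ω, X 0 ω ∂P := by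
      have h0 := (hsup n).2.1 0 (j:ℝ≥0) zero_le
      calc ∫ ω, MeasureTheory.stoppedProcess X (fun ω => ((τn n ω : ℝ≥0) : WithTop ℝ≥0)) (j:ℝ≥0) ω ∂P
          = ∫ ω, (P[MeasureTheory.stoppedProcess X (fun ω => ((τn n ω : ℝ≥0) : WithTop ℝ≥0)) (j:ℝ≥0)|𝓕 0]) ω ∂P :=
            (integral_condExp (𝓕.le 0)).symm
        _ ≤ ∫ ω, MeasureTheory.stoppedProcess X (fun ω => ((τn n ω : ℝ≥0) : WithTop ℝ≥0)) 0 ω ∂P :=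
            integral_mono_ae integrable_condExp ((hsup n).integrable 0) h0
        _ = ∫ ω, X 0 ω ∂P := by
            refine integral_congr_ae (Eventually.of_forall fun ω => ?_)
            exact stoppedProcess_eq_of_le (by exact_mod_cast (zero_le : (0:ℝ≥0) ≤ τn n ω))
    simp only [measure_univ, ENNReal.toReal_one, smul_eq_mul, one_mul, one_smul, probReal_univ]
    linarith
  have hE3 : ∀ᵐ ω ∂P, liminf (fun n => liminf (fun j : ℕ =>
      ENNReal.ofReal (MeasureTheory.stoppedProcess X (fun ω => ((τn n ω : ℝ≥0) : WithTop ℝ≥0)) (j : ℝ≥0) ω - c)) atTop) atTop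
      ≠ ⊤ := by
    have hmeas : ∀ n, Measurable (fun ω => liminf (fun j : ℕ =>
        ENNReal.ofReal (MeasureTheory.stoppedProcess X (fun ω => ((τn n ω : ℝ≥0) : WithTop ℝ≥0)) (j : ℝ≥0) ω - c)) atTop) :=
      fun n => Measurable.liminf fun j =>
        ((hYmeas n (j:ℝ≥0)).sub measurable_const).ennreal_ofReal
    have hfin : ∫⁻ ω, liminf (fun n => liminf (fun j : ℕ =>
        ENNReal.ofReal (MeasureTheory.stoppedProcess X (fun ω => ((τn n ω : ℝ≥0) : WithTop ℝ≥0)) (j : ℝ≥0) ω - c)) atTop)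
          atTop ∂P ≠ ⊤ := by
      have hub : ∀ n, ∫⁻ ω, liminf (fun j : ℕ =>
          ENNReal.ofReal (MeasureTheory.stoppedProcess X (fun ω => ((τn n ω : ℝ≥0) : WithTop ℝ≥0)) (j : ℝ≥0) ω - c)) atTop ∂P ≤
          ENNReal.ofReal (∫ ω, X 0 ω ∂P - c) := by
        intro n
        refine le_trans (lintegral_liminf_le fun j =>
          ((hYmeas n (j:ℝ≥0)).sub measurable_const).ennreal_ofReal) ?_
        exact liminf_le_of_frequently_le (Frequently.of_forall fun j => hZle n j)
          (by isBoundedDefault)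
      refine ne_top_of_le_ne_top
        (show ENNReal.ofReal (∫ ω, X 0 ω ∂P - c) ≠ ⊤ from ENNReal.ofReal_ne_top) ?_
      refine le_trans (lintegral_liminf_le hmeas) ?_
      exact liminf_le_of_frequently_le (Frequently.of_forall fun n => hub n)
        (by isBoundedDefault)
    filter_upwards [ae_lt_top (Measurable.liminf hmeas) hfin] with ω hω
    exact hω.ne
  -- the pointwise argument
  filter_upwards [hann, hE2, hE3] with ω hω1 hω2 hω3
  obtain ⟨hlt, htend⟩ := hω1
  by_cases hτ0 : τ ω = 0
  · refine ⟨X 0 ω, fun h => absurd (hτ0.symm.trans h) (by simp), fun r hr => ?_⟩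
    have hr0 : r = 0 := by
      have := hr.symm.trans hτ0
      exact_mod_cast this
    rw [hr0]
    have : Iio (0:ℝ≥0) = ∅ := by
      ext x; simp
    rw [nhdsWithin, this]
    simp only [principal_empty, inf_bot_eq]
    exact tendsto_bot
  have hτpos : 0 < τ ω := pos_iff_ne_zero.2 hτ0
  have hlt' := hlt hτpos
  -- key: convergence along a filter `l` approximating `τ ω` from below
  have key : ∀ (l : Filter ℝ≥0), l.NeBot →
      Tendsto (fun n => τn n ω) atTop l →
      (∀ (g' : ℝ≥0 → ℝ), (∀ t, ContinuousWithinAt g' (Ici t) t) →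
        ∀ p : ℝ, (∃ᶠ t in l, g' t < p) → ∀ s : ℝ≥0, (s:ℝ≥0∞) < τ ω →
          ∃ m k : ℕ, s < dy m k ∧ ((dy m k : ℝ≥0) : ℝ≥0∞) < τ ω ∧ g' (dy m k) < p) →
      ∃ L : ℝ, Tendsto (fun t => X t ω) l (𝓝 L) := by
    intro l hl hsl hstep
    -- no oscillation across any rational levels
    have hosc : ∀ (p q : ℚ), (p:ℝ) < (q:ℝ) →
        ¬ ((∃ᶠ t in l, X t ω < (p:ℝ)) ∧ (∃ᶠ t in l, (q:ℝ) < X t ω)) := by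
      rintro p q hpq ⟨hfp, hfq⟩
      -- one step: find a dyadic pair above `s`
      have hABstep : ∀ s : ℝ≥0, (s:ℝ≥0∞) < τ ω → ∃ d e : ℝ≥0,
          (∃ m k : ℕ, d = dy m k) ∧ (∃ m k : ℕ, e = dy m k) ∧
          s < d ∧ d < e ∧ ((e : ℝ≥0) : ℝ≥0∞) < τ ω ∧ (q:ℝ) < X d ω ∧ X e ω < (p:ℝ) := by
        intro s hs
        obtain ⟨m1, k1, hd1, hd2, hd3⟩ := hstep (fun t => -(X t ω))
          (fun t => (hrc ω t).neg) (-(q:ℝ))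
          (hfq.mono fun t ht => by simpa using neg_lt_neg ht) s hs
        obtain ⟨m2, k2, he1, he2, he3⟩ := hstep (fun t => X t ω) (hrc ω) (p:ℝ) hfp
          (dy m1 k1) hd2
        exact ⟨dy m1 k1, dy m2 k2, ⟨m1, k1, rfl⟩, ⟨m2, k2, rfl⟩, hd1, he1, he2,
          by simpa using neg_lt_neg hd3, he3⟩
      -- infinite alternating dyadic sequence below `τ ω`
      let T := {x : ℝ≥0 × ℝ≥0 // (∃ m k : ℕ, x.1 = dy m k) ∧ (∃ m k : ℕ, x.2 = dy m k) ∧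
        x.1 < x.2 ∧ ((x.2 : ℝ≥0) : ℝ≥0∞) < τ ω ∧ (q:ℝ) < X x.1 ω ∧ X x.2 ω < (p:ℝ)}
      have hstepT : ∀ x : T, ∃ y : T, x.val.2 < y.val.1 := by
        rintro ⟨⟨d, e⟩, hd, he, hde, heτ, hqd, hep⟩
        obtain ⟨d', e', hd'1, he'1, hsd', hde', he'τ, hqd', he'p⟩ := hABstep e heτ
        exact ⟨⟨⟨d', e'⟩, hd'1, he'1, hde', he'τ, hqd', he'p⟩, hsd'⟩
      have hT0 : ∃ x : T, True := by
        obtain ⟨d, e, hd1, he1, _, hde, heτ, hqd, hep⟩ := hABstep 0 hτpos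
        exact ⟨⟨⟨d, e⟩, hd1, he1, hde, heτ, hqd, hep⟩, trivial⟩
      obtain ⟨x0, -⟩ := hT0
      choose next hnext using hstepT
      let seq : ℕ → T := fun n => next^[n] x0
      have hseq_succ : ∀ n, (seq n).val.2 < (seq (n + 1)).val.1 := by
        intro n
        have : seq (n + 1) = next (seq n) := Function.iterate_succ_apply' next n x0
        rw [this]
        exact hnext (seq n)
      have hseq_lt : ∀ n, (seq n).val.1 < (seq n).val.2 := fun n => (seq n).prop.2.2.1
      have he_mono : StrictMono (fun n => (seq n).val.2) :=
        strictMono_nat_of_lt_succ fun n => lt_trans (hseq_succ n) (hseq_lt (n + 1))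
      have hij : ∀ i j : ℕ, i < j → (seq i).val.2 < (seq j).val.1 := by
        intro i j hlt'
        have h1 : (seq i).val.2 ≤ (seq (j - 1)).val.2 := by
          rcases eq_or_lt_of_le (Nat.le_sub_one_of_lt hlt') with h | h
          · rw [h]
          · exact (he_mono h).le
        have h2 : (seq (j - 1)).val.2 < (seq j).val.1 := by
          have : j - 1 + 1 = j := by omega
          rw [← this]
          exact hseq_succ (j - 1)
        exact lt_of_le_of_lt h1 h2
      -- build patterns of arbitrary length, for all large n, reach a contradiction
      have hliminf : liminf (fun n => ⨆ m,
          patCnt ((-q : ℚ):ℝ) ((-p : ℚ):ℝ)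
            (fun t => -(MeasureTheory.stoppedProcess X (fun ω => ((τn n ω : ℝ≥0) : WithTop ℝ≥0)) t ω)) m) atTop = ⊤ := by
        rw [eq_top_iff, ← ENNReal.iSup_natCast]
        refine iSup_le fun K => ?_
        refine le_liminf_of_le (by isBoundedDefault) ?_
        rcases Nat.eq_zero_or_pos K with hK0 | hK0
        · simp [hK0]
        -- choose a common grid
        have hdm : ∀ i : Fin K, ∃ m k : ℕ, (seq i).val.1 = dy m k := fun i => (seq i).prop.1
        have hem : ∀ i : Fin K, ∃ m k : ℕ, (seq i).val.2 = dy m k := fun i => (seq i).prop.2.1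
        choose md kd hkd using hdm
        choose me ke hke using hem
        obtain ⟨M, hM⟩ : ∃ M, ∀ i : Fin K, md i ≤ M ∧ me i ≤ M := by
          refine ⟨(Finset.univ.sup fun i : Fin K => max (md i) (me i)), fun i => ?_⟩
          constructor
          · exact le_trans (le_max_left _ _)
              (Finset.le_sup (f := fun i : Fin K => max (md i) (me i)) (Finset.mem_univ i))
          · exact le_trans (le_max_right _ _)
              (Finset.le_sup (f := fun i : Fin K => max (md i) (me i)) (Finset.mem_univ i))
        set v : Fin K → ℕ := fun i => kd i * 2 ^ (M - md i) with hv
        set w : Fin K → ℕ := fun i => ke i * 2 ^ (M - me i) with hw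
        have hvd : ∀ i, dy M (v i) = (seq i).val.1 := fun i =>
          ((hkd i).trans (dy_raise (hM i).1 (kd i))).symm
        have hwe : ∀ i, dy M (w i) = (seq i).val.2 := fun i =>
          ((hke i).trans (dy_raise (hM i).2 (ke i))).symm
        -- the largest time in the pattern
        have hbound : ∀ i : Fin K, (seq (i:ℕ)).val.2 ≤ (seq (K - 1)).val.2 := by
          intro i
          rcases eq_or_lt_of_le (Nat.le_sub_one_of_lt i.isLt) with h | h
          · rw [h]
          · exact (he_mono h).le
        have heΚ : (((seq (K - 1)).val.2 : ℝ≥0) : ℝ≥0∞) < τ ω := (seq (K - 1)).prop.2.2.2.1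
        have hev : ∀ᶠ n in atTop, ((seq (K - 1)).val.2 : ℝ≥0∞) < (τn n ω : ℝ≥0∞) :=
          htend.eventually_const_lt heΚ
        filter_upwards [hev] with n hn
        -- the pattern for the stopped process
        have hstp : ∀ t : ℝ≥0, t ≤ (seq (K - 1)).val.2 →
            MeasureTheory.stoppedProcess X (fun ω => ((τn n ω : ℝ≥0) : WithTop ℝ≥0)) t ω = X t ω := by
          intro t ht
          have : t ≤ τn n ω := by
            have := hn
            rw [ENNReal.coe_lt_coe] at this
            exact le_trans ht this.le
          exact stoppedProcess_eq_of_le (by exact_mod_cast this)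
        have hpat : pat ((-q : ℚ):ℝ) ((-p : ℚ):ℝ)
            (fun t => -(MeasureTheory.stoppedProcess X (fun ω => ((τn n ω : ℝ≥0) : WithTop ℝ≥0)) t ω)) M K := by
          refine ⟨v, w, fun i => ⟨?_, ?_, ?_⟩, fun i j hijK => ?_⟩
          · have h1 : dy M (v i) < dy M (w i) := by
              rw [hvd, hwe]; exact hseq_lt i
            exact (dy_strictMono M).lt_iff_lt.1 h1
          · show -(MeasureTheory.stoppedProcess X (fun ω => ((τn n ω : ℝ≥0) : WithTop ℝ≥0)) (dy M (v i)) ω) < ((-q : ℚ):ℝ)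
            rw [hvd i, hstp _ (le_trans (hseq_lt i).le (hbound i))]
            push_cast
            have := (seq (i:ℕ)).prop.2.2.2.2.1
            linarith
          · show ((-p : ℚ):ℝ) < -(MeasureTheory.stoppedProcess X (fun ω => ((τn n ω : ℝ≥0) : WithTop ℝ≥0)) (dy M (w i)) ω)
            rw [hwe i, hstp _ (hbound i)]
            push_cast
            have := (seq (i:ℕ)).prop.2.2.2.2.2
            linarith
          · have h1 : dy M (w i) < dy M (v j) := by
              rw [hvd, hwe]
              exact hij i j (by exact_mod_cast hijK)
            exact (dy_strictMono M).lt_iff_lt.1 h1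
        calc (K : ℝ≥0∞) ≤ patCnt ((-q : ℚ):ℝ) ((-p : ℚ):ℝ)
              (fun t => -(MeasureTheory.stoppedProcess X (fun ω => ((τn n ω : ℝ≥0) : WithTop ℝ≥0)) t ω)) M :=
            le_iSup_of_le K (le_iSup_of_le hpat le_rfl)
          _ ≤ ⨆ m, patCnt ((-q : ℚ):ℝ) ((-p : ℚ):ℝ)
              (fun t => -(MeasureTheory.stoppedProcess X (fun ω => ((τn n ω : ℝ≥0) : WithTop ℝ≥0)) t ω)) m :=
            le_iSup (fun m => patCnt _ _ _ m) M
      exact hω2 (-q) (-p) (by push_cast; linarith) hliminf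
    -- liminf = limsup in EReal
    set eh : ℝ≥0 → EReal := fun t => ((X t ω : ℝ) : EReal) with heh
    have hle : liminf eh l ≤ limsup eh l := liminf_le_limsup
    have heq : liminf eh l = limsup eh l := by
      by_contra hne
      have hlt2 : liminf eh l < limsup eh l := lt_of_le_of_ne hle hne
      obtain ⟨p, hp1, hp2⟩ := EReal.exists_rat_btwn_of_lt hlt2
      obtain ⟨q, hq1, hq2⟩ := EReal.exists_rat_btwn_of_lt hp2
      refine hosc p q (by exact_mod_cast hq1) ⟨?_, ?_⟩
      · have := frequently_lt_of_liminf_lt (by isBoundedDefault) hp1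
        exact this.mono fun t ht => by
          simp only [heh] at ht
          exact_mod_cast ht
      · have := frequently_lt_of_lt_limsup (by isBoundedDefault) hq2
        exact this.mono fun t ht => by
          simp only [heh] at ht
          exact_mod_cast ht
    have hts : Tendsto eh l (𝓝 (limsup eh l)) := tendsto_of_liminf_eq_limsup heq rfl
    have htsZ : Tendsto (fun n => eh (τn n ω)) atTop (𝓝 (limsup eh l)) := hts.comp hsl
    -- the limit is not ⊥
    have hbot : (c : EReal) ≤ limsup eh l := by
      refine le_limsup_of_frequently_le ?_ (by isBoundedDefault)
      refine Frequently.of_forall fun t => ?_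
      simp only [heh]
      exact_mod_cast hbdd t ω
    -- the limit is not ⊤, thanks to hω3
    have hinner : ∀ n, liminf (fun j : ℕ =>
        ENNReal.ofReal (MeasureTheory.stoppedProcess X (fun ω => ((τn n ω : ℝ≥0) : WithTop ℝ≥0)) (j : ℝ≥0) ω - c)) atTop =
        ENNReal.ofReal (X (τn n ω) ω - c) := by
      intro n
      have hev : ∀ᶠ j : ℕ in atTop,
          ENNReal.ofReal (MeasureTheory.stoppedProcess X (fun ω => ((τn n ω : ℝ≥0) : WithTop ℝ≥0)) (j:ℝ≥0) ω - c) =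
          ENNReal.ofReal (X (τn n ω) ω - c) := by
        have hj : ∀ᶠ j : ℕ in atTop, τn n ω ≤ (j:ℝ≥0) :=
          tendsto_natCast_atTop_atTop.eventually_ge_atTop (τn n ω)
        filter_upwards [hj] with j hj'
        rw [stoppedProcess_eq_of_ge (by exact_mod_cast hj')]
        rfl
      rw [liminf_congr hev, liminf_const]
    have hZ : liminf (fun n => ENNReal.ofReal (X (τn n ω) ω - c)) atTop ≠ ⊤ := by
      have := hω3
      rwa [show (fun n => liminf (fun j : ℕ =>
        ENNReal.ofReal (MeasureTheory.stoppedProcess X (fun ω => ((τn n ω : ℝ≥0) : WithTop ℝ≥0)) (j : ℝ≥0) ω - c)) atTop) =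
        (fun n => ENNReal.ofReal (X (τn n ω) ω - c)) from funext hinner] at this
    have htopne : limsup eh l ≠ ⊤ := by
      intro htop'
      rw [htop'] at htsZ
      rw [EReal.tendsto_nhds_top_iff_real] at htsZ
      apply hZ
      rw [eq_top_iff, ← ENNReal.iSup_natCast]
      refine iSup_le fun M => le_liminf_of_le (by isBoundedDefault) ?_
      filter_upwards [htsZ (c + M)] with n hn
      have hxn : c + (M:ℝ) < X (τn n ω) ω := by
        simp only [heh] at hn
        exact_mod_cast hn
      calc (M : ℝ≥0∞) = ENNReal.ofReal (M:ℝ) := (ENNReal.ofReal_natCast M).symm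
        _ ≤ ENNReal.ofReal (X (τn n ω) ω - c) := ENNReal.ofReal_le_ofReal (by linarith)
    have hbotne : limsup eh l ≠ ⊥ :=
      ((EReal.bot_lt_coe c).trans_le hbot).ne'
    refine ⟨(limsup eh l).toReal, ?_⟩
    have hcoe : (((limsup eh l).toReal : ℝ) : EReal) = limsup eh l :=
      EReal.coe_toReal htopne hbotne
    rw [← hcoe] at hts
    exact EReal.tendsto_coe.1 hts
  -- apply `key` in the two cases
  rcases eq_or_ne (τ ω) ∞ with htop | htop
  · have hsl : Tendsto (fun n => τn n ω) atTop atTop := by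
      rw [htop] at htend
      exact ENNReal.tendsto_coe_nhds_top.1 htend
    have hstep : ∀ (g' : ℝ≥0 → ℝ), (∀ t, ContinuousWithinAt g' (Ici t) t) →
        ∀ p : ℝ, (∃ᶠ t in atTop, g' t < p) → ∀ s : ℝ≥0, (s:ℝ≥0∞) < τ ω →
          ∃ m k : ℕ, s < dy m k ∧ ((dy m k : ℝ≥0) : ℝ≥0∞) < τ ω ∧ g' (dy m k) < p := by
      intro g' hg' p hfreq s _
      obtain ⟨t, htp, hts⟩ := (hfreq.and_eventually (eventually_gt_atTop s)).exists
      have hmem : {u : ℝ≥0 | g' u < p} ∈ 𝓝[Ici t] t := hg' t (Iio_mem_nhds htp)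
      rw [mem_nhdsGE_iff_exists_Ico_subset] at hmem
      obtain ⟨u, hu, hsub⟩ := hmem
      obtain ⟨m, k, h1, h2⟩ := dy_exists_btwn hu
      exact ⟨m, k, lt_trans hts h1, by rw [htop]; exact ENNReal.coe_lt_top, hsub ⟨h1.le, h2⟩⟩
    obtain ⟨L, hL⟩ := key atTop atTop_neBot hsl hstep
    refine ⟨L, fun _ => hL, fun r hr => ?_⟩
    exact absurd (hr.symm.trans htop) ENNReal.coe_ne_top
  · set r : ℝ≥0 := (τ ω).toNNReal with hrdef
    have hτr : τ ω = (r : ℝ≥0∞) := (ENNReal.coe_toNNReal htop).symm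
    have hrpos : 0 < r := by
      rw [hτr] at hτpos
      exact_mod_cast hτpos
    have hnb : (𝓝[<] r).NeBot := nhdsWithin_Iio_self_neBot' ⟨0, hrpos⟩
    have hsl : Tendsto (fun n => τn n ω) atTop (𝓝[<] r) := by
      rw [tendsto_nhdsWithin_iff]
      constructor
      · rw [hτr] at htend
        exact ENNReal.tendsto_coe.1 htend
      · refine Eventually.of_forall fun n => ?_
        have := hlt' n
        rw [hτr] at this
        exact_mod_cast this
    have hstep : ∀ (g' : ℝ≥0 → ℝ), (∀ t, ContinuousWithinAt g' (Ici t) t) →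
        ∀ p : ℝ, (∃ᶠ t in 𝓝[<] r, g' t < p) → ∀ s : ℝ≥0, (s:ℝ≥0∞) < τ ω →
          ∃ m k : ℕ, s < dy m k ∧ ((dy m k : ℝ≥0) : ℝ≥0∞) < τ ω ∧ g' (dy m k) < p := by
      intro g' hg' p hfreq s hs
      have hsr : s < r := by
        rw [hτr] at hs
        exact_mod_cast hs
      obtain ⟨t, htp, hts⟩ :=
        (hfreq.and_eventually (Ioo_mem_nhdsLT_of_mem ⟨hsr, le_rfl⟩)).exists
      have hmem : {u : ℝ≥0 | g' u < p} ∈ 𝓝[Ici t] t := hg' t (Iio_mem_nhds htp)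
      rw [mem_nhdsGE_iff_exists_Ico_subset] at hmem
      obtain ⟨u, hu, hsub⟩ := hmem
      have htmin : t < min u r := lt_min hu hts.2
      obtain ⟨m, k, h1, h2⟩ := dy_exists_btwn htmin
      refine ⟨m, k, lt_trans hts.1 h1, ?_, hsub ⟨h1.le, lt_of_lt_of_le h2 (min_le_left _ _)⟩⟩
      rw [hτr]
      exact_mod_cast lt_of_lt_of_le h2 (min_le_right _ _)
    obtain ⟨L, hL⟩ := key (𝓝[<] r) hnb hsl hstep
    refine ⟨L, fun h => absurd h htop, fun r' hr' => ?_⟩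
    have hrr : r' = r := by
      have := hr'.symm.trans hτr
      exact_mod_cast this
    rw [hrr]
    exact hL
end

section
/- Let f : [0,∞) → ℝ be right-continuous, let u(t) = inf_{0≤s≤t} |f(s)| be the running infimum of |f|, and let t_0 = inf{t ≥ 0 : u(t) = 0} (with inf ∅ = ∞). Assume t_0 > 0 and inf_{0≤s<t_0} |f(s)| = 0 (the case where |f| reaches zero continuously). For each n ≥ 1 set s_n = inf{t ≥ 0 : u(t) ≤ 1/n}. Then the sequence (s_n)_{n≥1} is nondecreasing, s_n < t_0 for every n ≥ 1, and lim_{n→∞} s_n = t_0. -/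
open Filter Set
open scoped NNReal ENNReal Topology

/-- If the running infimum `u` of `|f|` first reaches zero at `t₀ > 0`, and `|f|`
reaches zero continuously (i.e. `inf_{s < t₀} |f s| = 0`), then the first passage
times `s_n = inf {t : u t ≤ 1/n}` form a nondecreasing sequence with `s_n < t₀`
for all `n ≥ 1` and `s_n → t₀`. -/
theorem announcing_sequence_for_continuous_hitting_time
    (f : ℝ≥0 → ℝ) (hf : ∀ t, ContinuousWithinAt f (Ici t) t)
    (u : ℝ≥0 → ℝ) (hu : ∀ t, u t = sInf ((fun s => |f s|) '' Iic t))
    (t₀ : ℝ≥0∞) (ht₀ : t₀ = sInf ((fun t : ℝ≥0 => (t : ℝ≥0∞)) '' {t : ℝ≥0 | u t = 0}))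
    (ht₀pos : 0 < t₀)
    (hcont : sInf ((fun s => |f s|) '' {s : ℝ≥0 | (s : ℝ≥0∞) < t₀}) = 0)
    (s : ℕ → ℝ≥0) (hs : ∀ n : ℕ, 1 ≤ n → s n = sInf {t : ℝ≥0 | u t ≤ 1 / (n : ℝ)}) :
    (∀ i j : ℕ, 1 ≤ i → i ≤ j → s i ≤ s j) ∧
    (∀ n : ℕ, 1 ≤ n → (s n : ℝ≥0∞) < t₀) ∧
    Tendsto (fun n : ℕ => (s n : ℝ≥0∞)) atTop (𝓝 t₀) := by
  have hbdd : ∀ S : Set ℝ≥0, BddBelow ((fun s => |f s|) '' S) := by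
    intro S
    refine ⟨0, ?_⟩
    rintro x ⟨t, -, rfl⟩
    exact abs_nonneg _
  have hu0 : ∀ t, 0 ≤ u t := by
    intro t
    rw [hu]
    refine le_csInf ⟨|f t|, t, self_mem_Iic, rfl⟩ ?_
    rintro x ⟨r, -, rfl⟩
    exact abs_nonneg _
  have huf : ∀ t, u t ≤ |f t| := by
    intro t
    rw [hu]
    exact csInf_le (hbdd _) ⟨t, self_mem_Iic, rfl⟩
  have hmono : ∀ a b : ℝ≥0, a ≤ b → u b ≤ u a := by
    intro a b hab
    rw [hu, hu]
    exact csInf_le_csInf (hbdd _) ⟨|f a|, a, self_mem_Iic, rfl⟩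
      (image_mono (Iic_subset_Iic.mpr hab))
  have hne0 : ∀ a : ℝ≥0, (a : ℝ≥0∞) < t₀ → 0 < u a := by
    intro a ha
    rcases (hu0 a).lt_or_eq with h | h
    · exact h
    · exfalso
      have : t₀ ≤ (a : ℝ≥0∞) := ht₀ ▸ sInf_le ⟨a, h.symm, rfl⟩
      exact absurd ha (not_lt.mpr this)
  have hwit : ∀ ε : ℝ, 0 < ε → ∃ t : ℝ≥0, (t : ℝ≥0∞) < t₀ ∧ u t < ε := by
    intro ε hε
    have hne : ((fun s => |f s|) '' {s : ℝ≥0 | (s : ℝ≥0∞) < t₀}).Nonempty :=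
      ⟨|f 0|, 0, by simpa using ht₀pos, rfl⟩
    obtain ⟨x, ⟨t, ht, rfl⟩, hx⟩ := exists_lt_of_csInf_lt hne (by rw [hcont]; exact hε)
    exact ⟨t, ht, lt_of_le_of_lt (huf t) hx⟩
  have hAne : ∀ n : ℕ, 1 ≤ n → ∃ t : ℝ≥0, (t : ℝ≥0∞) < t₀ ∧ u t ≤ 1 / (n : ℝ) := by
    intro n hn
    have hnpos : (0 : ℝ) < (n : ℝ) := by exact_mod_cast hn
    obtain ⟨t, ht, hlt⟩ := hwit (1 / (n : ℝ)) (one_div_pos.mpr hnpos)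
    exact ⟨t, ht, hlt.le⟩
  have hlt : ∀ n : ℕ, 1 ≤ n → (s n : ℝ≥0∞) < t₀ := by
    intro n hn
    obtain ⟨t, ht, hut⟩ := hAne n hn
    have hle : s n ≤ t := by
      rw [hs n hn]
      exact csInf_le (OrderBot.bddBelow _) hut
    exact lt_of_le_of_lt (ENNReal.coe_le_coe.mpr hle) ht
  refine ⟨?_, hlt, ?_⟩
  · intro i j hi hij
    rw [hs i hi, hs j (hi.trans hij)]
    refine csInf_le_csInf (OrderBot.bddBelow _) ?_ ?_
    · obtain ⟨t, -, ht⟩ := hAne j (hi.trans hij)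
      exact ⟨t, ht⟩
    · intro t ht
      have hipos : (0 : ℝ) < (i : ℝ) := by exact_mod_cast hi
      have : (1 : ℝ) / (j : ℝ) ≤ 1 / (i : ℝ) :=
        one_div_le_one_div_of_le hipos (by exact_mod_cast hij)
      exact le_trans ht this
  · rw [tendsto_order]
    constructor
    · intro a ha
      obtain ⟨c, hac, hct⟩ := exists_between ha
      have hctop : c < ⊤ := lt_of_lt_of_le hct le_top
      lift c to ℝ≥0 using hctop.ne
      have hucpos : 0 < u c := hne0 c hct
      obtain ⟨m, hm⟩ := exists_nat_one_div_lt hucpos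
      set n₀ := m + 1 with hn₀
      have hn₀1 : 1 ≤ n₀ := Nat.le_add_left 1 m
      have hm' : (1 : ℝ) / (n₀ : ℝ) < u c := by exact_mod_cast hm
      filter_upwards [eventually_ge_atTop n₀] with n hn
      have hn1 : 1 ≤ n := hn₀1.trans hn
      have hdiv : (1 : ℝ) / (n : ℝ) ≤ 1 / (n₀ : ℝ) :=
        one_div_le_one_div_of_le (by exact_mod_cast hn₀1) (by exact_mod_cast hn)
      have hlb : c ≤ s n := by
        rw [hs n hn1]
        obtain ⟨t, -, ht⟩ := hAne n hn1
        refine le_csInf ⟨t, ht⟩ ?_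
        intro x hx
        by_contra hxc
        push_neg at hxc
        have : u c ≤ u x := hmono x c hxc.le
        have : u c ≤ 1 / (n : ℝ) := this.trans hx
        exact absurd (this.trans hdiv) (not_le.mpr hm')
      exact lt_of_lt_of_le hac (ENNReal.coe_le_coe.mpr hlb)
    · intro b hb
      filter_upwards [eventually_ge_atTop 1] with n hn
      exact (hlt n hn).trans hb
end
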